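/- Let L be a binary subword-closed language and m a natural number such that none of the words 0^{m+1}·1·0^{m+1}, 1^{m+1}·0·1^{m+1}, 0^{m+1}·1^{m+1}, 1^{m+1}·0^{m+1} belongs to L (i.e., max(Hom(L), Het(L)) ≤ m). Then, with t = 2m and p = 2^{3t+3}·(2t+4), for every natural number n the set L(n) of words of L of length n has at most p elements. -/

import Mathlib

/-- Binary words over the alphabet `E = {0,1}`, encoded as lists of booleans. -/
abbrev Word := List Bool

/-- A binary language `L` is subword-closed if every subsequence (sublist) of a word
of `L` belongs to `L`. -/
def SubwordClosed (L : Set Word) : Prop :=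
  ∀ w ∈ L, ∀ u : Word, u.Sublist w → u ∈ L

/-- The word `a^m ā a^m`. -/
def homWord (m : ℕ) (a : Bool) : Word :=
  List.replicate m a ++ [!a] ++ List.replicate m a

/-- The word `a^m ā^m`. -/
def hetWord (m : ℕ) (a : Bool) : Word :=
  List.replicate m a ++ List.replicate m (!a)

/-- The set `L(n)` of words of `L` of length `n`. -/
def LangAt (L : Set Word) (n : ℕ) : Set Word := {w : Word | w ∈ L ∧ w.length = n}

lemma count_false_add_count_true (l : List Bool) :
    l.count false + l.count true = l.length := by
  induction l with
  | nil => simp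
  | cons h t ih => cases h <;> simp [List.count_cons] <;> omega

lemma count_add_count_not (l : List Bool) (b : Bool) :
    l.count b + l.count (!b) = l.length := by
  have := count_false_add_count_true l
  cases b <;> simp only [Bool.not_false, Bool.not_true] <;> omega

/-- split a word at its (k+1)-th occurrence of `a`. -/
lemma exists_split (a : Bool) : ∀ (w : List Bool) (k : ℕ), k + 1 ≤ w.count a →
    ∃ x y, w = x ++ a :: y ∧ x.count a = k := by
  intro w
  induction w with
  | nil => intro k hk; simp at hk
  | cons h t ih =>
    intro k hk
    by_cases hha : h = a
    · subst hha
      match k with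
      | 0 => exact ⟨[], t, rfl, by simp⟩
      | j + 1 =>
        have : j + 1 ≤ t.count h := by
          simp [List.count_cons] at hk; omega
        obtain ⟨x, y, hxy, hc⟩ := ih j this
        exact ⟨h :: x, y, by simp [hxy], by simp [List.count_cons, hc]⟩
    · have : k + 1 ≤ t.count a := by
        rw [List.count_cons] at hk
        simp [hha] at hk; omega
      obtain ⟨x, y, hxy, hc⟩ := ih k this
      refine ⟨h :: x, y, by simp [hxy], ?_⟩
      simp [List.count_cons, hc, hha]

lemma minority (L : Set Word) (hL : SubwordClosed L) (m : ℕ)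
    (hhet : ∀ a : Bool, hetWord (m + 1) a ∉ L) {w : Word} (hw : w ∈ L) :
    w.count false ≤ 2 * m ∨ w.count true ≤ 2 * m := by
  by_contra hcon
  push_neg at hcon
  obtain ⟨hf, ht⟩ := hcon
  obtain ⟨x, y, hxy, hcx⟩ := exists_split false w m (by omega)
  rcases le_or_gt (x.count true) m with hxt | hxt
  · -- few trues in the prefix: het false sublist
    have hyt : m + 1 ≤ y.count true := by
      have := hxy ▸ ht
      simp [List.count_append, List.count_cons] at this
      omega
    have h1 : List.Sublist (List.replicate (m+1) false) (x ++ [false]) := by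
      rw [List.replicate_sublist_iff]
      simp [List.count_append, hcx]
    have h2 : List.Sublist (List.replicate (m+1) true) y :=
      List.replicate_sublist_iff.mpr hyt
    have hsub : List.Sublist (hetWord (m+1) false) w := by
      rw [hxy]
      have : x ++ false :: y = (x ++ [false]) ++ y := by simp
      rw [this]
      exact (h1.append h2).trans (by simp [hetWord])
    exact hhet false (hL w hw _ hsub)
  · -- many trues in the prefix: het true sublist
    obtain ⟨x1, y1, hx1, hcx1⟩ := exists_split true x m hxt
    have hx1f : x1.count false ≤ m := by
      have : x1.count false ≤ x.count false := by
        rw [hx1]; simp [List.count_append]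
      omega
    have hrest : m + 1 ≤ (y1 ++ false :: y).count false := by
      have := hxy ▸ hf
      rw [hx1] at this
      simp [List.count_append, List.count_cons] at this ⊢
      omega
    have h1 : List.Sublist (List.replicate (m+1) true) (x1 ++ [true]) := by
      rw [List.replicate_sublist_iff]
      simp [List.count_append, hcx1]
    have h2 : List.Sublist (List.replicate (m+1) false) (y1 ++ false :: y) :=
      List.replicate_sublist_iff.mpr hrest
    have hsub : List.Sublist (hetWord (m+1) true) w := by
      rw [hxy, hx1]
      have : (x1 ++ true :: y1) ++ false :: y = (x1 ++ [true]) ++ (y1 ++ false :: y) := by simp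
      rw [this]
      exact (h1.append h2).trans (by simp [hetWord])
    exact hhet true (hL w hw _ hsub)

lemma mid_eq (L : Set Word) (hL : SubwordClosed L) (m : ℕ)
    (hhom : ∀ a : Bool, homWord (m + 1) a ∉ L) {w : Word} (hw : w ∈ L)
    (b : Bool) (hb : w.count b ≤ 2 * m) (i : ℕ) (hi : i < w.length)
    (h1 : 3 * m + 1 ≤ i) (h2 : i + (3 * m + 1) < w.length) :
    w[i] = !b := by
  by_contra hne
  have hib : w[i] = b := by cases hwi : w[i] <;> cases b <;> simp_all
  have htake : m + 1 ≤ (w.take i).count (!b) := by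
    have hlen : (w.take i).length = i := by simp [hi.le]
    have hc : (w.take i).count b ≤ 2 * m :=
      le_trans (List.Sublist.count_le b (List.take_sublist i w)) hb
    have := count_add_count_not (w.take i) b
    omega
  have hdrop : m + 1 ≤ (w.drop (i + 1)).count (!b) := by
    have hlen : (w.drop (i + 1)).length = w.length - (i + 1) := by simp
    have hc : (w.drop (i + 1)).count b ≤ 2 * m :=
      le_trans (List.Sublist.count_le b (List.drop_sublist _ w)) hb
    have := count_add_count_not (w.drop (i + 1)) b
    omega
  have hsub : List.Sublist (homWord (m + 1) (!b)) w := by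
    have hsplit : w = w.take i ++ w[i] :: w.drop (i + 1) := by
      rw [← List.drop_eq_getElem_cons hi, List.take_append_drop]
    rw [hsplit, hib]
    have hA : List.Sublist (List.replicate (m + 1) (!b)) (w.take i) :=
      List.replicate_sublist_iff.mpr htake
    have hB : List.Sublist ((!(!b)) :: List.replicate (m + 1) (!b)) (b :: w.drop (i + 1)) := by
      rw [Bool.not_not]
      exact (List.replicate_sublist_iff.mpr hdrop).cons₂ b
    have := hA.append hB
    simpa [homWord, List.append_assoc] using this
  exact hhom (!b) (hL w hw _ hsub)

/-- **Lemma 2.** If `L` is a binary subword-closed language such that none of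
`0^{m+1} 1 0^{m+1}`, `1^{m+1} 0 1^{m+1}`, `0^{m+1} 1^{m+1}`, `1^{m+1} 0^{m+1}`
belongs to `L` (i.e. `max(Hom(L), Het(L)) ≤ m`), then with `t = 2m` and
`p = 2^{3t+3}(2t+4)` we have `|L(n)| ≤ p` for every `n`. -/
theorem subword_closed_card_bound (L : Set Word) (hL : SubwordClosed L) (m : ℕ)
    (hhom : ∀ a : Bool, homWord (m + 1) a ∉ L)
    (hhet : ∀ a : Bool, hetWord (m + 1) a ∉ L) :
    ∀ n : ℕ, (LangAt L n).ncard ≤ 2 ^ (3 * (2 * m) + 3) * (2 * (2 * m) + 4) := by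
  intro n
  set K := 3 * m + 1 with hK
  have key : ∀ w ∈ L, ∀ i, ∀ hi : i < w.length, K ≤ i → i + K < w.length →
      w[i] = decide (2 * m < w.count true) := by
    intro w hw i hi hK1 hK2
    have hft := count_false_add_count_true w
    rcases minority L hL m hhet hw with hmin | hmin
    · have hT : 2 * m < w.count true := by omega
      rw [mid_eq L hL m hhom hw false hmin i hi hK1 hK2]
      simp [hT]
    · have hF : ¬ (2 * m < w.count true) := by omega
      rw [mid_eq L hL m hhom hw true hmin i hi hK1 hK2]
      simp [hF]
  set f : Word → (Fin K → Bool) × (Fin K → Bool) × Bool :=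
    fun w => (fun i => (w.take K).getD i false,
              fun i => (w.drop (w.length - K)).getD i false,
              decide (2 * m < w.count true)) with hf
  have hinj : Set.InjOn f (LangAt L n) := by
    intro u hu v hv hfe
    obtain ⟨hu1, hu2⟩ := hu
    obtain ⟨hv1, hv2⟩ := hv
    have hlen : u.length = v.length := by rw [hu2, hv2]
    have hf1 : ∀ i : Fin K, (u.take K).getD i false = (v.take K).getD i false :=
      fun i => congrFun (congrArg Prod.fst hfe) i
    have hf2 : ∀ i : Fin K, (u.drop (u.length - K)).getD i false
        = (v.drop (v.length - K)).getD i false :=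
      fun i => congrFun (congrArg (fun p => p.2.1) hfe) i
    have hf3 : decide (2 * m < u.count true) = decide (2 * m < v.count true) :=
      congrArg (fun p => p.2.2) hfe
    apply List.ext_getElem hlen
    intro i h_i h_i'
    by_cases hiK : i < K
    · have e1 : u[i] = (u.take K).getD i false := by
        rw [List.getD_eq_getElem?_getD, List.getElem?_take_of_lt hiK,
          List.getElem?_eq_getElem h_i]
        rfl
      have e2 : v[i] = (v.take K).getD i false := by
        rw [List.getD_eq_getElem?_getD, List.getElem?_take_of_lt hiK,
          List.getElem?_eq_getElem h_i']
        rfl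
      rw [e1, e2]
      exact hf1 ⟨i, hiK⟩
    · by_cases hiN : u.length - K ≤ i
      · have hjK : i - (u.length - K) < K := by omega
        have hidx : u.length - K + (i - (u.length - K)) = i := by omega
        have e1 : u[i] = (u.drop (u.length - K)).getD (i - (u.length - K)) false := by
          rw [List.getD_eq_getElem?_getD, List.getElem?_drop, hidx,
            List.getElem?_eq_getElem h_i]
          rfl
        have e2 : v[i] = (v.drop (v.length - K)).getD (i - (u.length - K)) false := by
          rw [List.getD_eq_getElem?_getD, List.getElem?_drop, ← hlen, hidx,
            List.getElem?_eq_getElem h_i']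
          rfl
        rw [e1, e2]
        exact hf2 ⟨i - (u.length - K), hjK⟩
      · have hK1 : K ≤ i := by omega
        have hK2 : i + K < u.length := by omega
        rw [key u hu1 i h_i hK1 hK2, key v hv1 i h_i' hK1 (hlen ▸ hK2), hf3]
  have hcard : (LangAt L n).ncard ≤ Nat.card ((Fin K → Bool) × (Fin K → Bool) × Bool) := by
    have := Set.ncard_le_ncard_of_injOn f (fun a _ => Set.mem_univ (f a)) hinj Set.finite_univ
    rwa [Set.ncard_univ] at this
  refine le_trans hcard ?_
  rw [Nat.card_eq_fintype_card]
  simp only [Fintype.card_prod, Fintype.card_fun, Fintype.card_bool, Fintype.card_fin]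
  have h1 : 2 ^ K * (2 ^ K * 2) = 2 ^ (3 * (2 * m) + 3) := by
    rw [hK, show 3 * (2 * m) + 3 = (3 * m + 1) + ((3 * m + 1) + 1) by ring, pow_add, pow_succ]; ring
  rw [h1]
  exact Nat.le_mul_of_pos_right _ (by omega)
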